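/- For any finite graph G = (V, E) and probability vector p ∈ [0,1]^E, the influence spread σ_p is submodular: for all A ⊆ B ⊆ V and x ∉ B, σ_p(A ∪ {x}) − σ_p(A) ≥ σ_p(B ∪ {x}) − σ_p(B). -/
import Mathlib


open Finset

/-- The set of vertices reachable from the seed set S using only edges in A. -/
noncomputable def reachSet {V : Type*} [Fintype V] (A : Finset (V × V)) (S : Finset V) :
    Finset V := by
  classical
  exact Finset.univ.filter (fun v => ∃ s ∈ S, Relation.ReflTransGen (fun a b => (a, b) ∈ A) s v)

/-- Influence spread: expected number of vertices reachable from S when each edge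
e ∈ E is retained independently with probability p e. -/
noncomputable def spread {V : Type*} [Fintype V] [DecidableEq V] (E : Finset (V × V))
    (p : V × V → ℝ) (S : Finset V) : ℝ :=
  ∑ A ∈ E.powerset, ((reachSet A S).card : ℝ) * ((∏ e ∈ A, p e) * ∏ e ∈ E \ A, (1 - p e))

lemma reachSet_mono {V : Type*} [Fintype V] (F : Finset (V × V)) {S T : Finset V}
    (h : S ⊆ T) : reachSet F S ⊆ reachSet F T := by
  classical
  intro v hv
  simp only [reachSet, mem_filter] at hv ⊢
  obtain ⟨_, s, hs, hrel⟩ := hv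
  exact ⟨mem_univ v, s, h hs, hrel⟩

lemma reachSet_insert {V : Type*} [Fintype V] [DecidableEq V] (F : Finset (V × V))
    (x : V) (S : Finset V) :
    reachSet F (insert x S) = reachSet F {x} ∪ reachSet F S := by
  classical
  ext v
  simp only [reachSet, mem_filter, mem_union, mem_insert, mem_singleton, mem_univ, true_and]
  constructor
  · rintro ⟨s, hs | hs, hrel⟩
    · exact Or.inl ⟨s, hs, hrel⟩
    · exact Or.inr ⟨s, hs, hrel⟩
  · rintro (⟨s, hs, hrel⟩ | ⟨s, hs, hrel⟩)
    · exact ⟨s, Or.inl hs, hrel⟩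
    · exact ⟨s, Or.inr hs, hrel⟩

lemma card_reach_submod {V : Type*} [Fintype V] [DecidableEq V] (F : Finset (V × V))
    {A B : Finset V} (hAB : A ⊆ B) (x : V) :
    (reachSet F (insert x B)).card + (reachSet F A).card ≤
      (reachSet F (insert x A)).card + (reachSet F B).card := by
  classical
  rw [reachSet_insert, reachSet_insert]
  set Rx := reachSet F {x}
  set RA := reachSet F A
  set RB := reachSet F B
  have hA : (Rx ∪ RA).card = (Rx \ RA).card + RA.card :=
    (Finset.card_sdiff_add_card Rx RA).symm
  have hB : (Rx ∪ RB).card = (Rx \ RB).card + RB.card :=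
    (Finset.card_sdiff_add_card Rx RB).symm
  have hsub : Rx \ RB ⊆ Rx \ RA :=
    Finset.sdiff_subset_sdiff (le_refl Rx) (reachSet_mono F hAB)
  have := Finset.card_le_card hsub
  omega

/-- the influence spread function is submodular. -/
theorem spread_submodular {V : Type*} [Fintype V] [DecidableEq V]
    (E : Finset (V × V)) (p : V × V → ℝ)
    (hp : ∀ e ∈ E, p e ∈ Set.Icc (0 : ℝ) 1)
    (A B : Finset V) (hAB : A ⊆ B) (x : V) (hx : x ∉ B) :
    spread E p (insert x B) - spread E p B ≤ spread E p (insert x A) - spread E p A := by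
  classical
  unfold spread
  rw [← Finset.sum_sub_distrib, ← Finset.sum_sub_distrib]
  apply Finset.sum_le_sum
  intro F hF
  rw [Finset.mem_powerset] at hF
  have hw : 0 ≤ (∏ e ∈ F, p e) * ∏ e ∈ E \ F, (1 - p e) := by
    apply mul_nonneg
    · exact Finset.prod_nonneg fun e he => (hp e (hF he)).1
    · exact Finset.prod_nonneg fun e he => by
        have := (hp e (Finset.mem_sdiff.mp he).1).2; linarith
  rw [← sub_mul, ← sub_mul]
  apply mul_le_mul_of_nonneg_right _ hw
  have h := card_reach_submod F hAB x
  have : ((reachSet F (insert x B)).card : ℝ) + (reachSet F A).card ≤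
      ((reachSet F (insert x A)).card : ℝ) + (reachSet F B).card := by exact_mod_cast h
  linarith
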